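/- Let Σ be a quasi-Lannér Coxeter diagram of order k (all proper subdiagrams elliptic or parabolic, Σ itself neither). Then the Gram matrix G(Σ) has signature (k−1, 1): exactly one negative eigenvalue and no kernel. -/

import Mathlib

open Matrix

/-- The principal submatrix of `A` on the index set `S`. -/
def subm {k : ℕ} (A : Matrix (Fin k) (Fin k) ℝ) (S : Finset (Fin k)) : Matrix ↥S ↥S ℝ :=
  A.submatrix (fun i => (i : Fin k)) (fun i => (i : Fin k))

/-- A parabolic (sub)diagram on the index set `S`: the principal submatrix is positive
semidefinite and every node lies in the support of a kernel vector (each connected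
component is singular). -/
def IsParabolic {k : ℕ} (G : Matrix (Fin k) (Fin k) ℝ) (S : Finset (Fin k)) : Prop :=
  (subm G S).PosSemidef ∧ ∀ i : ↥S, ∃ x : ↥S → ℝ, (subm G S).mulVec x = 0 ∧ x i ≠ 0

/-- Number of positive eigenvalues of a real symmetric matrix. -/
noncomputable def posIndex {m : Type*} [Fintype m] [DecidableEq m] {A : Matrix m m ℝ}
    (hA : A.IsHermitian) : ℕ := (Finset.univ.filter fun i => 0 < hA.eigenvalues i).card

/-- Number of negative eigenvalues of a real symmetric matrix. -/
noncomputable def negIndex {m : Type*} [Fintype m] [DecidableEq m] {A : Matrix m m ℝ}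
    (hA : A.IsHermitian) : ℕ := (Finset.univ.filter fun i => hA.eigenvalues i < 0).card

/-- Dimension of the kernel (number of zero eigenvalues) of a real symmetric matrix. -/
noncomputable def nullIndex {m : Type*} [Fintype m] [DecidableEq m] {A : Matrix m m ℝ}
    (hA : A.IsHermitian) : ℕ := (Finset.univ.filter fun i => hA.eigenvalues i = 0).card

/-- Restricting the quadratic form to a subset supporting the vector. -/
lemma subm_dot {k : ℕ} (G : Matrix (Fin k) (Fin k) ℝ) (S : Finset (Fin k)) (w : Fin k → ℝ)
    (hw : ∀ i, i ∉ S → w i = 0) :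
    (fun i : ↥S => w ↑i) ⬝ᵥ (subm G S) *ᵥ (fun i : ↥S => w ↑i) = w ⬝ᵥ G *ᵥ w := by
  have hinner : ∀ i : Fin k, (∑ j : ↥S, G i ↑j * w ↑j) = ∑ j, G i j * w j := by
    intro i
    rw [Finset.sum_coe_sort S (fun j => G i j * w j)]
    refine Finset.sum_subset (Finset.subset_univ S) ?_
    intro j _ hj; rw [hw j hj, mul_zero]
  simp only [dotProduct, mulVec, subm, submatrix_apply, dotProduct]
  calc ∑ i : ↥S, w ↑i * ∑ j : ↥S, G ↑i ↑j * w ↑j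
      = ∑ i : ↥S, w ↑i * ∑ j, G (↑i) j * w j := by
        refine Finset.sum_congr rfl fun i _ => by rw [hinner]
    _ = ∑ i ∈ S, w i * ∑ j, G i j * w j :=
        Finset.sum_coe_sort S (fun i => w i * ∑ j, G i j * w j)
    _ = ∑ i, w i * ∑ j, G i j * w j := by
        refine Finset.sum_subset (Finset.subset_univ S) ?_
        intro i _ hi; rw [hw i hi, zero_mul]

/-- Expansion of the quadratic form on a combination `a • u - b • v`. -/
lemma quad_comb {k : ℕ} (G : Matrix (Fin k) (Fin k) ℝ) (u v : Fin k → ℝ) (a b : ℝ) :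
    (a • u - b • v) ⬝ᵥ G *ᵥ (a • u - b • v) =
      a * a * (u ⬝ᵥ G *ᵥ u) - a * b * (u ⬝ᵥ G *ᵥ v) - a * b * (v ⬝ᵥ G *ᵥ u)
        + b * b * (v ⬝ᵥ G *ᵥ v) := by
  simp only [mulVec_sub, mulVec_smul, sub_dotProduct, dotProduct_sub, smul_dotProduct,
    dotProduct_smul, smul_eq_mul]
  ring

/-- The Gram matrix of a quasi-Lannér diagram of order `k` — a connected Coxeter diagram
(unit diagonal, off-diagonal entries `-cos (π/m)`, `m ≥ 2`) which is neither elliptic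
(positive definite) nor parabolic, all of whose proper subdiagrams are elliptic or
parabolic — has signature `(k - 1, 1)`: exactly one negative eigenvalue and no kernel. -/
theorem quasi_lanner_signature {k : ℕ}
    (G : Matrix (Fin k) (Fin k) ℝ) (hG : G.IsHermitian)
    (hdiag : ∀ i, G i i = 1)
    (hcox : ∀ i j, i ≠ j → ∃ m : ℕ, 2 ≤ m ∧ G i j = -Real.cos (Real.pi / m))
    (hconn : ∀ S : Finset (Fin k), S.Nonempty → S ≠ Finset.univ →
      ∃ i ∈ S, ∃ j ∉ S, G i j ≠ 0)
    (hproper : ∀ S : Finset (Fin k), S ≠ Finset.univ →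
      (subm G S).PosDef ∨ IsParabolic G S)
    (hnotell : ¬ G.PosDef) (hnotpar : ¬ IsParabolic G Finset.univ) :
    posIndex hG = k - 1 ∧ negIndex hG = 1 ∧ nullIndex hG = 0 := by
  classical
  have hstar : ∀ {α : Type} (f : α → ℝ), star f = f := fun f => funext fun _ => star_trivial _
  have hsym : ∀ i j, G j i = G i j := fun i j => by simpa using hG.apply i j
  -- off-diagonal entries are nonpositive
  have hoff : ∀ i j, i ≠ j → G i j ≤ 0 := by
    intro i j hij
    obtain ⟨m, hm, hGij⟩ := hcox i j hij
    rw [hGij, neg_nonpos]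
    apply Real.cos_nonneg_of_mem_Icc
    have hm' : (2:ℝ) ≤ (m:ℝ) := by exact_mod_cast hm
    have hmpos : (0:ℝ) < (m:ℝ) := by linarith
    constructor
    · have h0 : (0:ℝ) ≤ Real.pi / m := by positivity
      have := Real.pi_pos
      linarith
    · rw [div_le_iff₀ hmpos]
      have h2 := mul_le_mul_of_nonneg_left hm' (le_of_lt (half_pos Real.pi_pos))
      linarith
  -- the quadratic form is nonnegative on every coordinate hyperplane
  have key : ∀ (i : Fin k) (w : Fin k → ℝ), w i = 0 → 0 ≤ w ⬝ᵥ G *ᵥ w := by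
    intro i w hwi
    have hne : (Finset.univ.erase i) ≠ Finset.univ := fun h =>
      (Finset.notMem_erase i _) (h ▸ Finset.mem_univ i)
    have hpsd : (subm G (Finset.univ.erase i)).PosSemidef := by
      rcases hproper _ hne with h | h
      · exact h.posSemidef
      · exact h.1
    have hw0 : ∀ j, j ∉ Finset.univ.erase i → w j = 0 := by
      intro j hj
      have : j = i := by
        by_contra hji
        exact hj (Finset.mem_erase.mpr ⟨hji, Finset.mem_univ j⟩)
      rwa [this]
    have := hpsd.dotProduct_mulVec_nonneg (fun j : ↥(Finset.univ.erase i) => w ↑j)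
    rwa [hstar, subm_dot G _ w hw0] at this
  -- Step A: there exists a vector with negative quadratic value
  have hexneg : ∃ y : Fin k → ℝ, y ⬝ᵥ G *ᵥ y < 0 := by
    by_contra h
    push_neg at h
    have hpsd : G.PosSemidef := .of_dotProduct_mulVec_nonneg hG (fun x => by rw [hstar]; exact h x)
    have hker : ∃ x : Fin k → ℝ, x ≠ 0 ∧ G *ᵥ x = 0 := by
      by_contra hk
      push_neg at hk
      apply hnotell
      refine .of_dotProduct_mulVec_pos hG (fun x hx => ?_)
      rw [hstar]
      rcases lt_or_eq_of_le (h x) with hlt | heq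
      · exact hlt
      · exact absurd ((hpsd.dotProduct_mulVec_zero_iff x).mp
          (by rw [hstar]; exact heq.symm)) (hk x hx)
    obtain ⟨x, hx0, hxker⟩ := hker
    set z : Fin k → ℝ := fun i => |x i| with hzdef
    have hznn : ∀ i, 0 ≤ z i := fun i => abs_nonneg _
    have hq : z ⬝ᵥ G *ᵥ z ≤ x ⬝ᵥ G *ᵥ x := by
      simp only [dotProduct, mulVec, Finset.mul_sum]
      refine Finset.sum_le_sum fun i _ => Finset.sum_le_sum fun j _ => ?_
      rcases eq_or_ne i j with rfl | hij
      · have : z i * (G i i * z i) = x i * (G i i * x i) := by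
          rw [hdiag i]; simp only [one_mul, hzdef]
          exact abs_mul_abs_self (x i)
        exact le_of_eq this
      · have h1 : x i * x j ≤ z i * z j := by
          calc x i * x j ≤ |x i * x j| := le_abs_self _
            _ = |x i| * |x j| := abs_mul _ _
        have h2 := mul_le_mul_of_nonpos_left h1 (hoff i j hij)
        nlinarith [h2]
    rw [hxker, dotProduct_zero] at hq
    have hqz0 : z ⬝ᵥ G *ᵥ z = 0 := le_antisymm hq (h z)
    have hzker : G *ᵥ z = 0 := (hpsd.dotProduct_mulVec_zero_iff z).mp (by rw [hstar]; exact hqz0)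
    have hsupp : ∀ i, z i ≠ 0 := by
      set T := Finset.univ.filter (fun i => z i ≠ 0) with hT
      have hTne : T.Nonempty := by
        obtain ⟨i, hi⟩ := Function.ne_iff.mp hx0
        exact ⟨i, Finset.mem_filter.mpr ⟨Finset.mem_univ _, abs_ne_zero.mpr hi⟩⟩
      have hTuniv : T = Finset.univ := by
        by_contra hTu
        obtain ⟨i, hiT, j, hjT, hGij⟩ := hconn T hTne hTu
        have hzj : z j = 0 := by
          by_contra hzj
          exact hjT (Finset.mem_filter.mpr ⟨Finset.mem_univ _, hzj⟩)
        have hrow : ∑ l, G j l * z l = 0 := congrFun hzker j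
        have hterms : ∀ l ∈ Finset.univ, G j l * z l ≤ 0 := by
          intro l _
          rcases eq_or_ne l j with rfl | hlj
          · rw [hdiag l, hzj, mul_zero]
          · exact mul_nonpos_of_nonpos_of_nonneg (hoff j l (Ne.symm hlj)) (hznn l)
        have hzero := (Finset.sum_eq_zero_iff_of_nonpos hterms).mp hrow i (Finset.mem_univ i)
        have hGji : G j i ≠ 0 := by rw [hsym]; exact hGij
        have hzi : z i ≠ 0 := (Finset.mem_filter.mp hiT).2
        rcases mul_eq_zero.mp hzero with h' | h'
        · exact hGji h'
        · exact hzi h'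
      intro i
      have : i ∈ T := hTuniv.symm ▸ Finset.mem_univ i
      exact (Finset.mem_filter.mp this).2
    apply hnotpar
    constructor
    · refine .of_dotProduct_mulVec_nonneg (hG.submatrix _) (fun y => ?_)
      rw [hstar]
      set w : Fin k → ℝ := fun i => y ⟨i, Finset.mem_univ i⟩ with hw
      have hy : (fun i : ↥(Finset.univ : Finset (Fin k)) => w ↑i) = y := by
        funext i; simp [hw]
      rw [← hy, subm_dot G Finset.univ w (fun i hi => absurd (Finset.mem_univ i) hi)]
      have := hpsd.dotProduct_mulVec_nonneg w
      rwa [hstar] at this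
    · intro i
      refine ⟨fun j : ↥(Finset.univ : Finset (Fin k)) => z ↑j, ?_, hsupp ↑i⟩
      funext j
      show ∑ l : ↥(Finset.univ : Finset (Fin k)), G (↑j) ↑l * z ↑l = 0
      rw [Finset.sum_coe_sort Finset.univ (fun l => G (↑j) l * z l)]
      exact congrFun hzker ↑j
  -- eigen-infrastructure
  set e : Fin k → ℝ := hG.eigenvalues with he
  have hmul : ∀ a, G *ᵥ ⇑(hG.eigenvectorBasis a) = e a • ⇑(hG.eigenvectorBasis a) :=
    fun a => hG.mulVec_eigenvectorBasis a
  have hdot : ∀ a b, (⇑(hG.eigenvectorBasis a) : Fin k → ℝ) ⬝ᵥ ⇑(hG.eigenvectorBasis b)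
      = if a = b then 1 else 0 := by
    intro a b
    have h := orthonormal_iff_ite.mp hG.eigenvectorBasis.orthonormal a b
    rw [dotProduct_comm]
    simpa [PiLp.inner_apply, RCLike.inner_apply, dotProduct, starRingEnd_apply] using h
  have hqe : ∀ a b, (⇑(hG.eigenvectorBasis a) : Fin k → ℝ) ⬝ᵥ G *ᵥ ⇑(hG.eigenvectorBasis b)
      = if a = b then e b else 0 := by
    intro a b
    rw [hmul b, dotProduct_smul, hdot a b, smul_eq_mul]
    split_ifs <;> simp
  -- a negative eigenvalue exists
  have hnegeig : ∃ a, e a < 0 := by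
    by_contra hno
    push_neg at hno
    obtain ⟨y, hy⟩ := hexneg
    have := (hG.posSemidef_iff_eigenvalues_nonneg.mpr (fun i => hno i)).dotProduct_mulVec_nonneg y
    rw [hstar] at this
    linarith
  obtain ⟨a₀, ha₀⟩ := hnegeig
  -- at most one negative eigenvalue
  have hle1 : (Finset.univ.filter fun i => e i < 0).card ≤ 1 := by
    refine Finset.card_le_one.mpr fun a ha b hb => ?_
    have hea : e a < 0 := (Finset.mem_filter.mp ha).2
    have heb : e b < 0 := (Finset.mem_filter.mp hb).2
    by_contra hab
    set u : Fin k → ℝ := ⇑(hG.eigenvectorBasis a) with hu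
    set v : Fin k → ℝ := ⇑(hG.eigenvectorBasis b) with hv
    have huu : u ⬝ᵥ G *ᵥ u = e a := by rw [hu, hqe a a, if_pos rfl]
    have hvv : v ⬝ᵥ G *ᵥ v = e b := by rw [hv, hqe b b, if_pos rfl]
    have huv : u ⬝ᵥ G *ᵥ v = 0 := by rw [hu, hv, hqe a b, if_neg hab]
    have hvu : v ⬝ᵥ G *ᵥ u = 0 := by rw [hu, hv, hqe b a, if_neg (Ne.symm hab)]
    set w : Fin k → ℝ := v a • u - u a • v with hwdef
    have hwa : w a = 0 := by simp [hwdef]; ring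
    have hk := key a w hwa
    rw [hwdef, quad_comb, huu, hvv, huv, hvu] at hk
    have h1 : u a * u a * e b ≤ 0 := by nlinarith [mul_self_nonneg (u a)]
    have h2 : v a * v a * e a ≤ 0 := by nlinarith [mul_self_nonneg (v a)]
    have h3 : u a * u a * e b = 0 := le_antisymm h1 (by linarith)
    have hua : u a = 0 := by
      rcases mul_eq_zero.mp h3 with h' | h'
      · exact mul_self_eq_zero.mp h'
      · exact absurd h' (ne_of_lt heb)
    have hk2 := key a u hua
    rw [huu] at hk2
    linarith
  have hge1 : 1 ≤ (Finset.univ.filter fun i => e i < 0).card :=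
    Finset.card_pos.mpr ⟨a₀, Finset.mem_filter.mpr ⟨Finset.mem_univ _, ha₀⟩⟩
  have hnegcard : (Finset.univ.filter fun i => e i < 0).card = 1 := le_antisymm hle1 hge1
  -- no zero eigenvalue
  have hnz : ∀ b, e b ≠ 0 := by
    intro b heb0
    have hab : a₀ ≠ b := fun h => by rw [h, heb0] at ha₀; exact lt_irrefl 0 ha₀
    set u : Fin k → ℝ := ⇑(hG.eigenvectorBasis a₀) with hu
    set v : Fin k → ℝ := ⇑(hG.eigenvectorBasis b) with hv
    have hvker : G *ᵥ v = 0 := by rw [hv, hmul b, heb0, zero_smul]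
    have huu : u ⬝ᵥ G *ᵥ u = e a₀ := by rw [hu, hqe a₀ a₀, if_pos rfl]
    have huv : u ⬝ᵥ G *ᵥ v = 0 := by rw [hvker, dotProduct_zero]
    have hvv : v ⬝ᵥ G *ᵥ v = 0 := by rw [hvker, dotProduct_zero]
    have hvu : v ⬝ᵥ G *ᵥ u = 0 := by rw [hu, hv, hqe b a₀, if_neg (Ne.symm hab)]
    have hv0 : ∀ i, v i = 0 := by
      intro i
      set w : Fin k → ℝ := v i • u - u i • v with hwdef
      have hwi : w i = 0 := by simp [hwdef]; ring
      have hk := key i w hwi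
      rw [hwdef, quad_comb, huu, hvv, huv, hvu] at hk
      have h1 : v i * v i * e a₀ ≤ 0 := by nlinarith [mul_self_nonneg (v i)]
      have h3 : v i * v i * e a₀ = 0 := le_antisymm h1 (by linarith)
      rcases mul_eq_zero.mp h3 with h' | h'
      · exact mul_self_eq_zero.mp h'
      · exact absurd h' (ne_of_lt ha₀)
    have h1 : v ⬝ᵥ v = 1 := by rw [hv, hdot b b, if_pos rfl]
    rw [show v ⬝ᵥ v = 0 by simp [dotProduct, hv0]] at h1
    norm_num at h1
  have hnullcard : (Finset.univ.filter fun i => e i = 0).card = 0 := by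
    rw [Finset.card_eq_zero, Finset.filter_eq_empty_iff]
    exact fun x _ => hnz x
  -- counting
  have hsplit : (Finset.univ.filter fun i => 0 < e i).card
      + (Finset.univ.filter fun i => e i < 0).card = k := by
    have h1 := Finset.card_filter_add_card_filter_not
      (s := (Finset.univ : Finset (Fin k))) (p := fun i => 0 < e i)
    have h2 : (Finset.univ.filter fun i => ¬ 0 < e i)
        = (Finset.univ.filter fun i => e i < 0) := by
      refine Finset.filter_congr fun i _ => ?_
      constructor
      · intro hnot
        exact lt_of_le_of_ne (not_lt.mp hnot) (hnz i)
      · intro hlt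
        exact not_lt.mpr (le_of_lt hlt)
    rw [h2] at h1
    simpa using h1
  refine ⟨?_, ?_, ?_⟩
  · show (Finset.univ.filter fun i => 0 < e i).card = k - 1
    omega
  · exact hnegcard
  · exact hnullcard
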